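/- arXiv:1304.0184 — 3 statements merged into one kernel-verified Lean document; each statement's English description precedes it below -/
import Mathlib

section
/- Let a be an n×n complex matrix and let q(t) be a differentiable matrix-valued function such that det(1+q(t)) ≠ 0 for all t in an interval. Then q satisfies the matrix Riccati equation q'(t) = (1+q(t)) a (1−q(t)) if and only if the Cayley transform C(q(t)) = (1−q(t))(1+q(t))^{-1} satisfies the linear equation (d/dt) C(q(t)) = −2a·C(q(t)). -/
open Matrix

attribute [local instance] Matrix.linftyOpNormedRing Matrix.linftyOpNormedAlgebra

section aux
variable {n : ℕ}

/-- derivative of the Cayley transform in terms of q'. -/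
lemma cayley_hasDerivAt (q q' : ℝ → Matrix (Fin n) (Fin n) ℂ) (t : ℝ)
    (hq : HasDerivAt q (q' t) t) (hdet : (1 + q t).det ≠ 0) :
    HasDerivAt (fun u => (1 - q u) * (1 + q u)⁻¹)
      (-(q' t) * (1 + q t)⁻¹ +
        (1 - q t) * (-((1 + q t)⁻¹ * q' t * (1 + q t)⁻¹))) t := by
  have hu : IsUnit (1 + q t) := (Matrix.isUnit_iff_isUnit_det _).2 (isUnit_iff_ne_zero.2 hdet)
  set u : (Matrix (Fin n) (Fin n) ℂ)ˣ := hu.unit with hudef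
  have hinv : (fun u => (1 + q u)⁻¹) = fun u => Ring.inverse (1 + q u) := by
    funext x; exact Matrix.nonsing_inv_eq_ringInverse _
  have h1 : HasDerivAt (fun u => 1 + q u) (q' t) t := by
    have := (hasDerivAt_const t (1 : Matrix (Fin n) (Fin n) ℂ)).add hq
    rw [zero_add] at this
    exact this
  have h2 : HasFDerivAt Ring.inverse
      (-ContinuousLinearMap.mulLeftRight ℝ _ ↑u⁻¹ ↑u⁻¹) (1 + q t) := by
    have := hasFDerivAt_ringInverse (𝕜 := ℝ) u
    simpa [hudef] using this
  have h3 : HasDerivAt (fun u => (1 + q u)⁻¹)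
      (-((1 + q t)⁻¹ * q' t * (1 + q t)⁻¹)) t := by
    rw [hinv]
    have := h2.comp_hasDerivAt t h1
    simp [Matrix.coe_units_inv, hudef, IsUnit.unit_spec,
      Matrix.nonsing_inv_eq_ringInverse] at this
    rw [← Matrix.nonsing_inv_eq_ringInverse] at this
    exact this
  have h4 : HasDerivAt (fun u => (1 : Matrix (Fin n) (Fin n) ℂ) - q u) (-(q' t)) t := by
    have := (hasDerivAt_const t (1 : Matrix (Fin n) (Fin n) ℂ)).sub hq
    rw [zero_sub] at this
    exact this
  exact h4.mul h3

end aux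

/-- Let `a` be an `n×n` complex matrix and `q(t)` a differentiable matrix-valued
function with `det(1 + q(t)) ≠ 0` on an interval.  Then `q` satisfies the matrix Riccati
equation `q' = (1+q) a (1−q)` iff the Cayley transform `C(q) = (1−q)(1+q)⁻¹` satisfies the
linear equation `(C(q))' = −2a · C(q)`. -/
theorem riccati_iff_cayley_linear {n : ℕ} (a : Matrix (Fin n) (Fin n) ℂ)
    (s : Set ℝ) (hs : IsOpen s)
    (q q' : ℝ → Matrix (Fin n) (Fin n) ℂ)
    (hdet : ∀ t ∈ s, (1 + q t).det ≠ 0)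
    (hq : ∀ t ∈ s, HasDerivAt q (q' t) t) :
    (∀ t ∈ s, q' t = (1 + q t) * a * (1 - q t)) ↔
      (∀ t ∈ s, HasDerivAt (fun u => (1 - q u) * (1 + q u)⁻¹)
        ((-2 : ℂ) • (a * ((1 - q t) * (1 + q t)⁻¹))) t) := by
  constructor
  · intro h t ht
    have hD := cayley_hasDerivAt q q' t (hq t ht) (hdet t ht)
    have hu : IsUnit (1 + q t).det := isUnit_iff_ne_zero.2 (hdet t ht)
    have hinvmul : (1 + q t)⁻¹ * (1 + q t) = 1 := Matrix.nonsing_inv_mul _ hu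
    convert hD using 1
    rw [h t ht]
    set P := 1 + q t
    set Q := 1 - q t
    have hPQ : P + Q = 2 := by simp only [P, Q]; rw [add_add_sub_cancel, one_add_one_eq_two]
    have key : -(P * a * Q) * P⁻¹ + Q * -(P⁻¹ * (P * a * Q) * P⁻¹)
        = -((P + Q) * (a * (Q * P⁻¹))) := by
      have : P⁻¹ * (P * a * Q) = a * Q := by
        calc P⁻¹ * (P * a * Q) = (P⁻¹ * P) * a * Q := by noncomm_ring
        _ = a * Q := by rw [hinvmul]; noncomm_ring
      rw [this]
      noncomm_ring
    have h2 : ((2:ℂ) • (1 : Matrix (Fin n) (Fin n) ℂ)) = 2 := by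
      rw [two_smul, one_add_one_eq_two]
    rw [key, hPQ, ← h2, smul_mul_assoc, one_mul, ← neg_smul]
  · intro h t ht
    have hD := cayley_hasDerivAt q q' t (hq t ht) (hdet t ht)
    have hu : IsUnit (1 + q t).det := isUnit_iff_ne_zero.2 (hdet t ht)
    have hinvmul : (1 + q t)⁻¹ * (1 + q t) = 1 := Matrix.nonsing_inv_mul _ hu
    have hmulinv : (1 + q t) * (1 + q t)⁻¹ = 1 := Matrix.mul_nonsing_inv _ hu
    have heq := hD.unique (h t ht)
    set P := 1 + q t
    set Q := 1 - q t
    -- multiply heq on the right by P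
    have heq2 : -(q' t) + Q * -(P⁻¹ * q' t) = (-2 : ℂ) • (a * Q) := by
      have := congrArg (· * P) heq
      simp only [add_mul, smul_mul_assoc, mul_assoc, hinvmul, mul_one, neg_mul] at this
      simpa [mul_assoc] using this
    -- rearrange: q' t + Q * (P⁻¹ * q' t) = (2:ℂ) • (a * Q)
    have heq3 : q' t + Q * (P⁻¹ * q' t) = (2 : ℂ) • (a * Q) := by
      have := congrArg Neg.neg heq2
      simpa [neg_add, neg_smul, add_comm] using this
    have hq'eq : q' t = P * (P⁻¹ * q' t) := by rw [← mul_assoc, hmulinv, one_mul]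
    have hsum : (P + Q) * (P⁻¹ * q' t) = (2 : ℂ) • (a * Q) := by
      rw [add_mul, ← hq'eq]
      exact heq3
    have hPQ : P + Q = 2 := by simp only [P, Q]; rw [add_add_sub_cancel, one_add_one_eq_two]
    have h2 : ((2:ℂ) • (1 : Matrix (Fin n) (Fin n) ℂ)) = 2 := by
      rw [two_smul, one_add_one_eq_two]
    rw [hPQ, ← h2, smul_mul_assoc, one_mul] at hsum
    have hfin : P⁻¹ * q' t = a * Q := by
      have h2ne : (2 : ℂ) ≠ 0 := two_ne_zero
      exact smul_right_injective _ h2ne hsum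
    calc q' t = P * (P⁻¹ * q' t) := hq'eq
      _ = P * (a * Q) := by rw [hfin]
      _ = P * a * Q := by rw [mul_assoc]
end

section
/- Let a be an n×n complex matrix and let g(t) be a nowhere-vanishing differentiable ℂ-valued function and q(t) a differentiable matrix function satisfying g'(t) = −(1/2) tr(a·q(t))·g(t) with q(t) = C^{-1}(e^{−2at}C(0)) = C^{-1}(e^{−2at}) = (1−e^{−2at})(1+e^{−2at})^{-1} and g(0) = 1. Then g(t) = det^{−1/2}((e^{at} + e^{−at})/2), where the branch of the square root is determined by continuity from g(0) = 1, on any interval where det(e^{at}+e^{−at}) ≠ 0. -/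
open Matrix NormedSpace

attribute [local instance] Matrix.linftyOpNormedRing Matrix.linftyOpNormedAlgebra

noncomputable def entryCLM {n : ℕ} (i j : Fin n) : Matrix (Fin n) (Fin n) ℂ →L[ℂ] ℂ :=
  LinearMap.toContinuousLinearMap
    { toFun := fun X => X i j, map_add' := fun _ _ => rfl, map_smul' := fun _ _ => rfl }

lemma det_update_sum {n : ℕ} (A B : Matrix (Fin n) (Fin n) ℂ) :
    (∑ σ : Equiv.Perm (Fin n), ((Equiv.Perm.sign σ : ℤ) : ℂ) *
      ∑ j, (∏ i ∈ Finset.univ.erase j, A (σ i) i) • B (σ j) j)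
    = (A.adjugate * B).trace := by
  have h1 : (A.adjugate * B).trace = ∑ j, Matrix.cramer A (fun k => B k j) j := by
    simp only [Matrix.trace, Matrix.diag, Matrix.mul_apply, Matrix.cramer_eq_adjugate_mulVec,
      Matrix.mulVec, dotProduct]
  rw [h1]
  simp only [smul_eq_mul, Finset.mul_sum]
  rw [Finset.sum_comm]
  refine Finset.sum_congr rfl fun j _ => ?_
  rw [Matrix.cramer_apply, Matrix.det_apply']
  refine Finset.sum_congr rfl fun σ _ => ?_
  rw [← Finset.mul_prod_erase Finset.univ _ (Finset.mem_univ j)]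
  rw [Matrix.updateCol_self]
  have : ∏ i ∈ Finset.univ.erase j, A.updateCol j (fun k => B k j) (σ i) i
      = ∏ i ∈ Finset.univ.erase j, A (σ i) i := by
    refine Finset.prod_congr rfl fun i hi => ?_
    rw [Matrix.updateCol_ne (Finset.ne_of_mem_erase hi)]
  rw [this]
  ring

lemma jacobi {n : ℕ} {M : ℝ → Matrix (Fin n) (Fin n) ℂ} {B : Matrix (Fin n) (Fin n) ℂ} {t : ℝ}
    (hM : HasDerivAt M B t) :
    HasDerivAt (fun u => (M u).det) (((M t).adjugate * B).trace) t := by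
  have hent : ∀ i j, HasDerivAt (fun u => M u i j) (B i j) t := fun i j => by
    have := (((entryCLM i j).restrictScalars ℝ).hasFDerivAt (x := M t)).comp_hasDerivAt t hM
    exact this
  have h1 : HasDerivAt (fun u => ∑ σ : Equiv.Perm (Fin n),
        ((Equiv.Perm.sign σ : ℤ) : ℂ) * ∏ i, M u (σ i) i)
      (∑ σ : Equiv.Perm (Fin n), ((Equiv.Perm.sign σ : ℤ) : ℂ) *
        ∑ j, (∏ i ∈ Finset.univ.erase j, M t (σ i) i) • B (σ j) j) t := by
    refine HasDerivAt.fun_sum fun σ _ => ?_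
    exact (HasDerivAt.fun_finsetProd (fun j _ => hent (σ j) j)).const_mul _
  rw [← det_update_sum (M t) B]
  convert h1 using 1
  funext u
  rw [Matrix.det_apply']

lemma hasDerivAt_expc {n : ℕ} (a : Matrix (Fin n) (Fin n) ℂ) (c : ℂ) (t : ℝ) :
    HasDerivAt (fun u : ℝ => NormedSpace.exp ((c * u) • a)) (c • (a * NormedSpace.exp ((c * t) • a))) t := by
  have h1 : HasDerivAt (fun z : ℂ => NormedSpace.exp (z • a)) (a * NormedSpace.exp ((c * t) • a)) (c * t) :=
    hasDerivAt_exp_smul_const' a (c * (t : ℂ))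
  have h2 : HasDerivAt (fun u : ℝ => c * (u : ℂ)) c t := by
    simpa using (Complex.ofRealCLM.hasDerivAt (x := t)).const_mul c
  exact h1.scomp t h2

lemma trace_key {n : ℕ} (a E F X : Matrix (Fin n) (Fin n) ℂ)
    (hEF : E * F = 1) (hFE : F * E = 1) (hEX : E * X = F) (hcommaF : F * a = a * F)
    (hdetN : (E + F).det ≠ 0) :
    ((((2 : ℂ)⁻¹ • (E + F)).adjugate) * ((2 : ℂ)⁻¹ • (a * E + -(a * F)))).trace
      = Matrix.trace (a * ((1 - X) * (1 + X)⁻¹)) * ((2 : ℂ)⁻¹ • (E + F)).det := by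
  have hNfact : E + F = E * (1 + X) := by rw [mul_add, mul_one, hEX]
  have hEmF : a * E + -(a * F) = a * (E * (1 - X)) := by
    rw [mul_sub, mul_one, hEX, mul_sub, ← sub_eq_add_neg]
  have hMdet0 : ((2 : ℂ)⁻¹ • (E + F)).det ≠ 0 := by
    rw [Matrix.det_smul, Fintype.card_fin]
    exact mul_ne_zero (pow_ne_zero _ (by norm_num)) hdetN
  have hNN : (E + F) * (E + F)⁻¹ = 1 :=
    Matrix.mul_nonsing_inv _ (isUnit_iff_ne_zero.2 hdetN)
  have hMinv : ((2 : ℂ)⁻¹ • (E + F))⁻¹ = (2 : ℂ) • (E + F)⁻¹ := by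
    apply Matrix.inv_eq_right_inv
    rw [smul_mul_assoc, mul_smul_comm, smul_smul]
    norm_num [hNN]
  have hadjM : ((2 : ℂ)⁻¹ • (E + F)).adjugate
      = ((2 : ℂ)⁻¹ • (E + F)).det • ((2 : ℂ)⁻¹ • (E + F))⁻¹ := by
    rw [Matrix.inv_def, Ring.inverse_eq_inv', smul_smul, mul_inv_cancel₀ hMdet0, one_smul]
  have hEinv : E⁻¹ = F := Matrix.inv_eq_right_inv hEF
  have hMB : ((2 : ℂ) • (E + F)⁻¹) * ((2 : ℂ)⁻¹ • (a * E + -(a * F)))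
      = (1 + X)⁻¹ * (a * (1 - X)) := by
    rw [smul_mul_assoc, mul_smul_comm, smul_smul]
    norm_num
    rw [hEmF, hNfact, Matrix.mul_inv_rev, hEinv]
    calc (1 + X)⁻¹ * F * (a * (E * (1 - X)))
        = (1 + X)⁻¹ * (F * a * E * (1 - X)) := by
          simp only [mul_assoc]
      _ = (1 + X)⁻¹ * (a * (1 - X)) := by rw [hcommaF, mul_assoc a F E, hFE, mul_one]
  rw [hadjM, smul_mul_assoc, Matrix.trace_smul, hMinv, hMB, smul_eq_mul, mul_comm]
  congr 1
  rw [Matrix.trace_mul_comm, mul_assoc]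

lemma deriv_step {n : ℕ} (a : Matrix (Fin n) (Fin n) ℂ) (t : ℝ)
    (hdetN : (NormedSpace.exp ((t : ℂ) • a) + NormedSpace.exp ((-(t : ℂ)) • a)).det ≠ 0) :
    HasDerivAt (fun u : ℝ => ((2 : ℂ)⁻¹ • (NormedSpace.exp ((u : ℂ) • a) + NormedSpace.exp ((-(u : ℂ)) • a))).det)
      (Matrix.trace (a * ((1 - NormedSpace.exp (((-2 : ℂ) * t) • a)) *
          (1 + NormedSpace.exp (((-2 : ℂ) * t) • a))⁻¹)) *
        ((2 : ℂ)⁻¹ • (NormedSpace.exp ((t : ℂ) • a) + NormedSpace.exp ((-(t : ℂ)) • a))).det) t := by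
  have hE : HasDerivAt (fun u : ℝ => NormedSpace.exp ((u : ℂ) • a)) (a * NormedSpace.exp ((t : ℂ) • a)) t := by
    have := hasDerivAt_expc a 1 t
    simpa only [one_mul, one_smul] using this
  have hF : HasDerivAt (fun u : ℝ => NormedSpace.exp ((-(u : ℂ)) • a))
      (-(a * NormedSpace.exp ((-(t : ℂ)) • a))) t := by
    have := hasDerivAt_expc a (-1) t
    simpa only [neg_one_mul, neg_one_smul] using this
  have hM := (hE.add hF).const_smul ((2 : ℂ)⁻¹)
  have hcomm1 : Commute ((t : ℂ) • a) ((-(t : ℂ)) • a) :=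
    ((Commute.refl a).smul_right _).smul_left _
  have hEF : NormedSpace.exp ((t : ℂ) • a) * NormedSpace.exp ((-(t : ℂ)) • a) = 1 := by
    rw [← Matrix.exp_add_of_commute _ _ hcomm1, ← add_smul]
    norm_num [exp_zero]
  have hFE : NormedSpace.exp ((-(t : ℂ)) • a) * NormedSpace.exp ((t : ℂ) • a) = 1 := by
    rw [← Matrix.exp_add_of_commute _ _ hcomm1.symm, ← add_smul]
    norm_num [exp_zero]
  have hEX : NormedSpace.exp ((t : ℂ) • a) * NormedSpace.exp (((-2 : ℂ) * t) • a) = NormedSpace.exp ((-(t : ℂ)) • a) := by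
    rw [← Matrix.exp_add_of_commute _ _ (((Commute.refl a).smul_right _).smul_left _), ← add_smul]
    congr 1
    ring_nf
  have hcommaF : NormedSpace.exp ((-(t : ℂ)) • a) * a = a * NormedSpace.exp ((-(t : ℂ)) • a) :=
    (((Commute.refl a).smul_right (-(t : ℂ))).exp_right).symm.eq
  convert jacobi hM using 1
  · rfl
  exact (trace_key a _ _ _ hEF hFE hEX hcommaF hdetN).symm

/-- Let `a` be an `n×n` complex matrix and `g` a nowhere-vanishing
differentiable scalar function with `g' = −(1/2) tr(a·q) g`, `g(0) = 1`, where
`q(t) = C⁻¹(e^{−2at}) = (1−e^{−2at})(1+e^{−2at})⁻¹`.  Then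
`g(t) = det^{−1/2}((e^{at}+e^{−at})/2)` (branch from `g(0)=1`), i.e.
`g(t)² · det((e^{at}+e^{−at})/2) = 1`, on any interval containing `0` where
`det(e^{at}+e^{−at}) ≠ 0`. -/
theorem amplitude_eq_det_inv_sqrt {n : ℕ} (a : Matrix (Fin n) (Fin n) ℂ)
    (s : Set ℝ) (hs : IsOpen s) (hconv : Convex ℝ s) (h0 : (0 : ℝ) ∈ s)
    (hdet : ∀ t ∈ s, (NormedSpace.exp ((t : ℂ) • a) + NormedSpace.exp ((-(t : ℂ)) • a)).det ≠ 0)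
    (g : ℝ → ℂ) (hgz : ∀ t ∈ s, g t ≠ 0)
    (hg : ∀ t ∈ s, HasDerivAt g
      (-(1 / 2) * Matrix.trace
        (a * ((1 - NormedSpace.exp (((-2 : ℂ) * t) • a)) * (1 + NormedSpace.exp (((-2 : ℂ) * t) • a))⁻¹)) * g t) t)
    (hg0 : g 0 = 1) :
    ∀ t ∈ s, (g t) ^ 2 * ((2 : ℂ)⁻¹ • (NormedSpace.exp ((t : ℂ) • a) + NormedSpace.exp ((-(t : ℂ)) • a))).det = 1 := by

  have hφ0 : g 0 ^ 2 *
      ((2 : ℂ)⁻¹ • (NormedSpace.exp (((0:ℝ) : ℂ) • a) + NormedSpace.exp ((-((0:ℝ) : ℂ)) • a))).det = 1 := by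
    rw [hg0]
    simp only [Complex.ofReal_zero, neg_zero, zero_smul, exp_zero, one_pow, one_mul]
    rw [show ((1 : Matrix (Fin n) (Fin n) ℂ) + 1) = (2 : ℂ) • 1 from (two_smul ℂ _).symm,
      smul_smul]
    norm_num
  have hderiv : ∀ t ∈ s, HasDerivAt (fun u : ℝ =>
      g u ^ 2 * ((2 : ℂ)⁻¹ • (NormedSpace.exp ((u : ℂ) • a) + NormedSpace.exp ((-(u : ℂ)) • a))).det) 0 t := by
    intro t ht
    have hgsq := (hg t ht).mul (hg t ht)
    have hsq : (g * g) = fun u => g u ^ 2 := by funext u; simp only [Pi.mul_apply]; ring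
    rw [hsq] at hgsq
    have hfinal := hgsq.mul (deriv_step a t (hdet t ht))
    convert hfinal using 1
    · rfl
    · rfl
    ring
  intro t ht
  have hest := hconv.norm_image_sub_le_of_norm_hasDerivWithin_le (C := 0)
    (f' := fun _ => (0 : ℂ)) (fun x hx => (hderiv x hx).hasDerivWithinAt)
    (fun x hx => by simp) h0 ht
  simp only [norm_zero, zero_mul] at hest
  have heq := norm_sub_eq_zero_iff.mp (le_antisymm hest (norm_nonneg _))
  rw [heq]
  exact hφ0
end

section
/- Let Λ be an invertible skew-symmetric n×n complex matrix and A a symmetric n×n complex matrix. If tan(iΛA) is defined (cos(iΛA) invertible), then the matrix (Λ^{-1}/i)·tan(iΛA) is symmetric. -/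
open Matrix NormedSpace

attribute [local instance] Matrix.linftyOpNormedRing Matrix.linftyOpNormedAlgebra

/-- The Cayley transform `C(X) = (1 − X)(1 + X)⁻¹`. -/
noncomputable def cayley {n : ℕ} (X : Matrix (Fin n) (Fin n) ℂ) : Matrix (Fin n) (Fin n) ℂ :=
  (1 - X) * (1 + X)⁻¹

/-- Matrix cosine `cos(a) = (e^{ia} + e^{−ia})/2`. -/
noncomputable def matCos {n : ℕ} (a : Matrix (Fin n) (Fin n) ℂ) : Matrix (Fin n) (Fin n) ℂ :=
  (2 : ℂ)⁻¹ • (exp (Complex.I • a) + exp ((-Complex.I) • a))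

/-- Matrix sine `sin(a) = (e^{ia} − e^{−ia})/(2i)`. -/
noncomputable def matSin {n : ℕ} (a : Matrix (Fin n) (Fin n) ℂ) : Matrix (Fin n) (Fin n) ℂ :=
  (2 * Complex.I)⁻¹ • (exp (Complex.I • a) - exp ((-Complex.I) • a))

/-- Matrix tangent `tan(a) = sin(a)·cos(a)⁻¹`, defined when `cos(a)` is invertible. -/
noncomputable def matTan {n : ℕ} (a : Matrix (Fin n) (Fin n) ℂ) : Matrix (Fin n) (Fin n) ℂ :=
  matSin a * (matCos a)⁻¹

lemma matSin_transpose {n : ℕ} (X : Matrix (Fin n) (Fin n) ℂ) :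
    matSin Xᵀ = (matSin X)ᵀ := by
  simp only [matSin, ← Matrix.transpose_smul, ← Matrix.exp_transpose,
    Matrix.transpose_sub, Matrix.transpose_smul]

lemma matCos_transpose {n : ℕ} (X : Matrix (Fin n) (Fin n) ℂ) :
    matCos Xᵀ = (matCos X)ᵀ := by
  simp only [matCos, ← Matrix.transpose_smul, ← Matrix.exp_transpose,
    Matrix.transpose_add, Matrix.transpose_smul]

lemma matSin_neg {n : ℕ} (X : Matrix (Fin n) (Fin n) ℂ) :
    matSin (-X) = -matSin X := by
  have e1 : Complex.I • (-X) = (-Complex.I) • X := by rw [smul_neg, neg_smul]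
  have e2 : (-Complex.I) • (-X) = Complex.I • X := by rw [smul_neg, neg_smul, neg_neg]
  rw [matSin, matSin, e1, e2, ← smul_neg, neg_sub]

lemma matCos_neg {n : ℕ} (X : Matrix (Fin n) (Fin n) ℂ) :
    matCos (-X) = matCos X := by
  have e1 : Complex.I • (-X) = (-Complex.I) • X := by rw [smul_neg, neg_smul]
  have e2 : (-Complex.I) • (-X) = Complex.I • X := by rw [smul_neg, neg_smul, neg_neg]
  rw [matCos, matCos, e1, e2, add_comm]

lemma matSin_units_conj {n : ℕ} (U : (Matrix (Fin n) (Fin n) ℂ)ˣ)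
    (X : Matrix (Fin n) (Fin n) ℂ) :
    matSin ((U : Matrix (Fin n) (Fin n) ℂ) * X * (↑U⁻¹ : Matrix (Fin n) (Fin n) ℂ)) =
      (U : Matrix (Fin n) (Fin n) ℂ) * matSin X * (↑U⁻¹ : Matrix (Fin n) (Fin n) ℂ) := by
  have h : ∀ c : ℂ, c • ((U : Matrix (Fin n) (Fin n) ℂ) * X * (↑U⁻¹ : Matrix (Fin n) (Fin n) ℂ))
      = (U : Matrix (Fin n) (Fin n) ℂ) * (c • X) * (↑U⁻¹ : Matrix (Fin n) (Fin n) ℂ) := by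
    intro c; rw [Matrix.mul_smul, Matrix.smul_mul]
  rw [matSin, matSin, h, h, Matrix.exp_units_conj, Matrix.exp_units_conj,
    Matrix.mul_smul, Matrix.smul_mul, mul_sub, sub_mul]

lemma matCos_units_conj {n : ℕ} (U : (Matrix (Fin n) (Fin n) ℂ)ˣ)
    (X : Matrix (Fin n) (Fin n) ℂ) :
    matCos ((U : Matrix (Fin n) (Fin n) ℂ) * X * (↑U⁻¹ : Matrix (Fin n) (Fin n) ℂ)) =
      (U : Matrix (Fin n) (Fin n) ℂ) * matCos X * (↑U⁻¹ : Matrix (Fin n) (Fin n) ℂ) := by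
  have h : ∀ c : ℂ, c • ((U : Matrix (Fin n) (Fin n) ℂ) * X * (↑U⁻¹ : Matrix (Fin n) (Fin n) ℂ))
      = (U : Matrix (Fin n) (Fin n) ℂ) * (c • X) * (↑U⁻¹ : Matrix (Fin n) (Fin n) ℂ) := by
    intro c; rw [Matrix.mul_smul, Matrix.smul_mul]
  rw [matCos, matCos, h, h, Matrix.exp_units_conj, Matrix.exp_units_conj,
    Matrix.mul_smul, Matrix.smul_mul, mul_add, add_mul]

lemma matSin_comm_matCos {n : ℕ} (X : Matrix (Fin n) (Fin n) ℂ) :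
    Commute (matSin X) (matCos X) := by
  have h : Commute (exp (Complex.I • X)) (exp ((-Complex.I) • X)) := by
    refine Commute.exp ?_
    simp only [neg_smul]
    exact (Commute.refl _).neg_right
  unfold matSin matCos
  exact ((((Commute.refl _).add_right h).sub_left
    (h.symm.add_right (Commute.refl _))).smul_left _).smul_right _

lemma commute_nonsing_inv {n : ℕ} (S C : Matrix (Fin n) (Fin n) ℂ)
    (h : S * C = C * S) (hC : IsUnit C.det) : C⁻¹ * S = S * C⁻¹ := by
  have h1 := Matrix.mul_nonsing_inv C hC
  have h2 := Matrix.nonsing_inv_mul C hC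
  calc C⁻¹ * S = C⁻¹ * S * (C * C⁻¹) := by rw [h1, mul_one]
    _ = C⁻¹ * (S * C) * C⁻¹ := by simp only [mul_assoc]
    _ = C⁻¹ * (C * S) * C⁻¹ := by rw [h]
    _ = S * C⁻¹ := by rw [← mul_assoc, h2, one_mul]

/-- For `Λ` invertible skew-symmetric and `A` symmetric, with `cos(iΛA)`
invertible, the matrix `(Λ⁻¹/i)·tan(iΛA)` is symmetric. -/
theorem tan_quadratic_symm {n : ℕ} (Λ A : Matrix (Fin n) (Fin n) ℂ)
    (hΛinv : IsUnit Λ.det) (hΛskew : Λᵀ = -Λ) (hA : Aᵀ = A)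
    (hcos : IsUnit (matCos (Complex.I • (Λ * A))).det) :
    (Complex.I⁻¹ • (Λ⁻¹ * matTan (Complex.I • (Λ * A))))ᵀ =
      Complex.I⁻¹ • (Λ⁻¹ * matTan (Complex.I • (Λ * A))) := by
  set X := Complex.I • (Λ * A) with hX
  set Y := Complex.I • (A * Λ) with hY
  have h1 : Λ * Λ⁻¹ = 1 := Matrix.mul_nonsing_inv Λ hΛinv
  have h2 : Λ⁻¹ * Λ = 1 := Matrix.nonsing_inv_mul Λ hΛinv
  set U : (Matrix (Fin n) (Fin n) ℂ)ˣ := ⟨Λ, Λ⁻¹, h1, h2⟩ with hU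
  have hUc : (U : Matrix (Fin n) (Fin n) ℂ) = Λ := rfl
  have hUic : (↑U⁻¹ : Matrix (Fin n) (Fin n) ℂ) = Λ⁻¹ := rfl
  -- X is conjugate to Y by Λ
  have hconj : X = Λ * Y * Λ⁻¹ := by
    rw [hX, hY, Matrix.mul_smul, Matrix.smul_mul, ← mul_assoc, mul_assoc (Λ * A) Λ Λ⁻¹,
      h1, mul_one]
  -- transpose of X
  have hXT : Xᵀ = -Y := by
    rw [hX, hY, Matrix.transpose_smul, Matrix.transpose_mul, hA, hΛskew, mul_neg, smul_neg]
  -- sin and cos conjugation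
  have hsin : matSin X = Λ * matSin Y * Λ⁻¹ := by
    rw [hconj, ← hUc, ← hUic, matSin_units_conj]
  have hcosc : matCos X = Λ * matCos Y * Λ⁻¹ := by
    rw [hconj, ← hUc, ← hUic, matCos_units_conj]
  -- cos Y is invertible
  have hcosY : IsUnit (matCos Y).det := by
    have : matCos Y = Λ⁻¹ * matCos X * Λ := by
      rw [hcosc, ← mul_assoc, ← mul_assoc, h2, one_mul, mul_assoc, h2, mul_one]
    rw [this, Matrix.det_mul, Matrix.det_mul]
    exact ((Matrix.isUnit_nonsing_inv_det Λ hΛinv).mul hcos).mul hΛinv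
  -- tan conjugation
  have hcosinv : (matCos X)⁻¹ = Λ * (matCos Y)⁻¹ * Λ⁻¹ := by
    rw [hcosc, Matrix.mul_inv_rev, Matrix.mul_inv_rev,
      Matrix.nonsing_inv_nonsing_inv Λ hΛinv, mul_assoc]
  have htan : matTan X = Λ * matTan Y * Λ⁻¹ := by
    rw [matTan, hsin, hcosinv, matTan]
    simp only [mul_assoc]
    rw [← mul_assoc Λ⁻¹ Λ, h2, one_mul]
  -- transpose of tan
  have htanT : (matTan X)ᵀ = -matTan Y := by
    have hcomm : (matCos Y)⁻¹ * matSin Y = matSin Y * (matCos Y)⁻¹ :=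
      commute_nonsing_inv _ _ (matSin_comm_matCos Y).eq hcosY
    rw [matTan, Matrix.transpose_mul, Matrix.transpose_nonsing_inv, ← matCos_transpose,
      ← matSin_transpose, hXT, matCos_neg, matSin_neg, mul_neg, hcomm, ← matTan]
  -- transpose of Λ⁻¹
  have hΛT : Λ⁻¹ᵀ = -Λ⁻¹ := by
    rw [Matrix.transpose_nonsing_inv, hΛskew]
    refine Matrix.inv_eq_right_inv ?_
    rw [neg_mul_neg, h1]
  have hkey : Λ⁻¹ * matTan X = matTan Y * Λ⁻¹ := by
    rw [htan, ← mul_assoc, ← mul_assoc, h2, one_mul]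
  rw [Matrix.transpose_smul, Matrix.transpose_mul, htanT, hΛT, neg_mul_neg, hkey]
end
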